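/- Let G be a finite simple (P_7, C_4, C_5, C_7)-free graph, let r ≥ 3 be an integer such that G contains an induced Θ_3^r, let T be an inclusion-wise maximal induced thickened Θ_3^r in G, and let (A, B_1,...,B_r, C_1,...,C_r, D) be a good partition for T. Then X = L_A ∪ L_D ∪ ⋃_{i=1}^r (T_{B_i} ∪ R_{B_i} ∪ T_{C_i} ∪ R_{C_i}), where X is the set of vertices of G outside T that are mixed on V(T). -/

import Mathlib

open SimpleGraph

namespace Paper

variable {V : Type*}

/-- `X` is complete to `Y` in `G`. -/
def CompleteTo (G : SimpleGraph V) (X Y : Set V) : Prop :=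
  ∀ x ∈ X, ∀ y ∈ Y, G.Adj x y

/-- `X` is anticomplete to `Y` in `G`. -/
def AnticompleteTo (G : SimpleGraph V) (X Y : Set V) : Prop :=
  ∀ x ∈ X, ∀ y ∈ Y, ¬ G.Adj x y

/-- Closed neighborhood of `v` inside the induced subgraph of `G` on `S`. -/
def cnbr (G : SimpleGraph V) (S : Set V) (v : V) : Set V :=
  {w | w ∈ S ∧ (w = v ∨ G.Adj v w)}

/-- Neighbors of `v` inside the set `X`. -/
def nbrIn (G : SimpleGraph V) (X : Set V) (v : V) : Set V :=
  {w | w ∈ X ∧ G.Adj v w}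

/-- `G` is a complete graph. -/
def IsCompleteGraph (G : SimpleGraph V) : Prop :=
  ∀ u v : V, u ≠ v → G.Adj u v

/-- The induced subgraph of `G` on `S` admits a clique-cutset: a (possibly empty) clique
`C ⊊ S` such that removing `C` from the induced subgraph on `S` disconnects it. -/
def HasCliqueCutsetOn (G : SimpleGraph V) (S : Set V) : Prop :=
  ∃ C : Set V, C ⊆ S ∧ C ≠ S ∧ G.IsClique C ∧ ¬ (G.induce (S \ C)).Connected

def HasCliqueCutset (G : SimpleGraph V) : Prop :=
  HasCliqueCutsetOn G Set.univ

/-- The induced subgraph of `G` on `S` contains an induced copy of `H`. -/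
def ContainsInducedOn {W : Type*} (G : SimpleGraph V) (S : Set V) (H : SimpleGraph W) : Prop :=
  ∃ f : W ↪ V, (∀ a, f a ∈ S) ∧ ∀ a b, G.Adj (f a) (f b) ↔ H.Adj a b

/-- The induced subgraph of `G` on `S` is `H`-free. -/
def FreeOn {W : Type*} (G : SimpleGraph V) (S : Set V) (H : SimpleGraph W) : Prop :=
  ¬ ContainsInducedOn G S H

/-- `G` is `H`-free. -/
def Free {W : Type*} (G : SimpleGraph V) (H : SimpleGraph W) : Prop :=
  FreeOn G Set.univ H

/-- The path on `n` vertices. -/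
def pathG (n : ℕ) : SimpleGraph (Fin n) :=
  SimpleGraph.fromRel (fun i j => (i : ℕ) + 1 = (j : ℕ))

/-- The cycle on `n` vertices. -/
def cycG (n : ℕ) : SimpleGraph (ZMod n) :=
  SimpleGraph.fromRel (fun i j => i + 1 = j)

/-- The graph `Θ₃ʳ`: `r` internally disjoint three-edge paths meeting at their endpoints.
`Sum.inl 0` and `Sum.inl 1` are the two endpoints, and `Sum.inr (i, 0)`, `Sum.inr (i, 1)`
are the internal vertices of the `i`-th path. -/
def thetaG (r : ℕ) : SimpleGraph (Fin 2 ⊕ Fin r × Fin 2) :=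
  SimpleGraph.fromRel (fun x y =>
    (∃ i : Fin r, x = Sum.inl 0 ∧ y = Sum.inr (i, 0)) ∨
    (∃ i : Fin r, x = Sum.inr (i, 0) ∧ y = Sum.inr (i, 1)) ∨
    (∃ i : Fin r, x = Sum.inr (i, 1) ∧ y = Sum.inl 1))

/-- `B` is the vertex set of an anticomponent of `G`. -/
def IsAnticomponent (G : SimpleGraph V) (B : Set V) : Prop :=
  ∃ c : Gᶜ.ConnectedComponent, B = c.supp

/-- `G` has exactly one nontrivial anticomponent, and that anticomponent satisfies `P`. -/
def ExactlyOneNontrivialAnticomponent (G : SimpleGraph V) (P : Set V → Prop) : Prop :=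
  ∃ B : Set V, IsAnticomponent G B ∧ B.Nontrivial ∧
    (∀ B' : Set V, IsAnticomponent G B' → B'.Nontrivial → B' = B) ∧ P B

/-- The stability number of the induced subgraph of `G` on `S`. -/
noncomputable def alphaOn (G : SimpleGraph V) (S : Set V) : ℕ :=
  sSup {n | ∃ T : Finset V, ↑T ⊆ S ∧ (∀ x ∈ T, ∀ y ∈ T, x ≠ y → ¬ G.Adj x y) ∧ T.card = n}

/-- The clique number of `G`. -/
noncomputable def cliqueNumber (G : SimpleGraph V) : ℕ :=
  sSup {n | ∃ T : Finset V, G.IsNClique n T}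

/-- A 7-hole in `G`, given by an injective map `x : ZMod 7 → V` whose image induces a `C₇`
traversed in the order `x 0, x 1, …, x 6, x 0`. -/
def IsHole7 (G : SimpleGraph V) (x : ZMod 7 → V) : Prop :=
  Function.Injective x ∧ ∀ i j, G.Adj (x i) (x j) ↔ (i - j = 1 ∨ j - i = 1)

/-- The set `A_i^*`: vertices of `A i` anticomplete to `A (i-2) ∪ A (i+2)`. -/
def braceletStar (G : SimpleGraph V) (A : ZMod 7 → Set V) (i : ZMod 7) : Set V :=
  {v | v ∈ A i ∧ ∀ w ∈ A (i - 2) ∪ A (i + 2), ¬ G.Adj v w}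

/-- The set `A_i^+`: vertices of `A i` anticomplete to `A (i-2)` with a neighbor in `A (i+2)`. -/
def braceletPlus (G : SimpleGraph V) (A : ZMod 7 → Set V) (i : ZMod 7) : Set V :=
  {v | v ∈ A i ∧ (∀ w ∈ A (i - 2), ¬ G.Adj v w) ∧ ∃ w ∈ A (i + 2), G.Adj v w}

/-- The set `A_i^-`: vertices of `A i` anticomplete to `A (i+2)` with a neighbor in `A (i-2)`. -/
def braceletMinus (G : SimpleGraph V) (A : ZMod 7 → Set V) (i : ZMod 7) : Set V :=
  {v | v ∈ A i ∧ (∀ w ∈ A (i + 2), ¬ G.Adj v w) ∧ ∃ w ∈ A (i - 2), G.Adj v w}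

/-- The induced subgraph of `G` on `S` is a 7-bracelet with good pair `(A, istar)`. -/
def IsGoodPairOn (G : SimpleGraph V) (S : Set V) (A : ZMod 7 → Set V) (istar : ZMod 7) : Prop :=
  -- `A` is a partition of `S`
  (⋃ i, A i) = S ∧
  (∀ i j : ZMod 7, i ≠ j → Disjoint (A i) (A j)) ∧
  -- (I)
  (∀ i, (A i).Nonempty ∧ G.IsClique (A i) ∧
    CompleteTo G (A i) (A (i - 1) ∪ A (i + 1)) ∧
    AnticompleteTo G (A i) (A (i - 3) ∪ A (i + 3))) ∧
  -- (II) (a)-(c): `A i` is partitioned into the canonical sets `A_i^*, A_i^+, A_i^-`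
  (∀ i, A i = braceletStar G A i ∪ braceletPlus G A i ∪ braceletMinus G A i) ∧
  -- (II) (d),(e): closed neighborhoods (in the induced subgraph on `S`) of vertices of
  -- `A_i^+` (resp. `A_i^-`) form a chain under inclusion
  (∀ i, ∀ u ∈ braceletPlus G A i, ∀ v ∈ braceletPlus G A i,
    cnbr G S u ⊆ cnbr G S v ∨ cnbr G S v ⊆ cnbr G S u) ∧
  (∀ i, ∀ u ∈ braceletMinus G A i, ∀ v ∈ braceletMinus G A i,
    cnbr G S u ⊆ cnbr G S v ∨ cnbr G S v ⊆ cnbr G S u) ∧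
  -- (II) (f)
  (∀ i, ∃ v ∈ A i, (∃ w ∈ A (i - 2), ¬ G.Adj v w) ∧ ∃ w ∈ A (i + 2), ¬ G.Adj v w) ∧
  -- (III)
  braceletPlus G A (istar - 3) = ∅ ∧ braceletMinus G A (istar - 3) = ∅ ∧
  braceletPlus G A (istar + 3) = ∅ ∧ braceletMinus G A (istar + 3) = ∅ ∧
  -- (IV)
  braceletMinus G A (istar - 2) = ∅ ∧ braceletPlus G A (istar + 2) = ∅ ∧
  -- (V)
  braceletMinus G A (istar - 1) = ∅ ∧ braceletPlus G A (istar + 1) = ∅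

def IsGoodPartitionOn (G : SimpleGraph V) (S : Set V) (A : ZMod 7 → Set V) : Prop :=
  ∃ istar, IsGoodPairOn G S A istar

/-- The induced subgraph of `G` on `S` is a 7-bracelet. -/
def IsBracelet7On (G : SimpleGraph V) (S : Set V) : Prop :=
  ∃ A istar, IsGoodPairOn G S A istar

/-- The induced subgraph of `G` on `S` is a quasi-7-bracelet with good partition `A`. -/
def IsQuasiGoodPartitionOn (G : SimpleGraph V) (S : Set V) (A : ZMod 7 → Set V) : Prop :=
  (⋃ i, A i) = S ∧
  (∀ i j : ZMod 7, i ≠ j → Disjoint (A i) (A j)) ∧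
  (∀ i, (A i).Nonempty ∧ G.IsClique (A i) ∧
    CompleteTo G (A i) (A (i - 1) ∪ A (i + 1)) ∧
    AnticompleteTo G (A i) (A (i - 3) ∪ A (i + 3))) ∧
  (∀ i, ∃ v ∈ A i, (∃ w ∈ A (i - 2), ¬ G.Adj v w) ∧ ∃ w ∈ A (i + 2), ¬ G.Adj v w)

/-- The induced subgraph of `G` on `S` is a thickened emerald with good triple `(A, C, istar)`.
Here `Em, Ep, Ps, Pm, Ms, Mp` play the roles of
`A_{i*}^-, A_{i*}^+, A_{i*+2}^*, A_{i*+2}^-, A_{i*-2}^*, A_{i*-2}^+`. -/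
def IsGoodTripleTEOn (G : SimpleGraph V) (S : Set V) (A : ZMod 7 → Set V)
    (C : Set V) (istar : ZMod 7) : Prop :=
  (C ∪ ⋃ i, A i) = S ∧
  (∀ i, Disjoint C (A i)) ∧
  (∀ i j : ZMod 7, i ≠ j → Disjoint (A i) (A j)) ∧
  C.Nonempty ∧ G.IsClique C ∧
  (∀ i, (A i).Nonempty ∧ G.IsClique (A i)) ∧
  (∀ i, CompleteTo G (A i) (A (i - 1) ∪ A (i + 1)) ∧
        AnticompleteTo G (A i) (A (i - 3) ∪ A (i + 3))) ∧
  (∀ i, (i = istar - 3 ∨ i = istar - 1 ∨ i = istar + 1 ∨ i = istar + 3) →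
        AnticompleteTo G (A i) (A (i - 2) ∪ A (i + 2))) ∧
  ∃ Em Ep Ps Pm Ms Mp : Set V,
    Em.Nonempty ∧ Ep.Nonempty ∧ Ps.Nonempty ∧ Pm.Nonempty ∧ Ms.Nonempty ∧ Mp.Nonempty ∧
    List.Pairwise (fun X Y : Set V => Disjoint X Y) [Em, Ep, Ps, Pm, Ms, Mp] ∧
    G.IsClique Em ∧ G.IsClique Ep ∧ G.IsClique Ps ∧ G.IsClique Pm ∧
    G.IsClique Ms ∧ G.IsClique Mp ∧
    A istar = Em ∪ Ep ∧
    A (istar + 2) = Ps ∪ Pm ∧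
    A (istar - 2) = Ms ∪ Mp ∧
    CompleteTo G Em Mp ∧ AnticompleteTo G Em (Ms ∪ A (istar + 2)) ∧
    CompleteTo G Ep Pm ∧ AnticompleteTo G Ep (Ps ∪ A (istar - 2)) ∧
    CompleteTo G C (Ps ∪ A (istar + 3) ∪ A (istar - 3) ∪ Ms) ∧
    AnticompleteTo G C (Mp ∪ A (istar - 1) ∪ A istar ∪ A (istar + 1) ∪ Pm)

/-- The induced subgraph of `G` on `S` is a thickened emerald. -/
def IsThickenedEmeraldOn (G : SimpleGraph V) (S : Set V) : Prop :=
  ∃ A C istar, IsGoodTripleTEOn G S A C istar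

/-- The neighborhoods in `Y` of the vertices of `X` form a chain under inclusion whose
largest element is all of `Y`: this encodes "`X` can be ordered as `x_1, …, x_t` so that
`N[x_t] ∩ Y ⊆ ⋯ ⊆ N[x_1] ∩ Y = Y`". -/
def ChainedPairTo (G : SimpleGraph V) (X Y : Set V) : Prop :=
  (∀ u ∈ X, ∀ v ∈ X, nbrIn G Y u ⊆ nbrIn G Y v ∨ nbrIn G Y v ⊆ nbrIn G Y u) ∧
  (∃ u ∈ X, ∀ y ∈ Y, G.Adj u y)

/-- The induced subgraph of `G` on `S` is an `r`-lantern with good partition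
`(A, Bs 0, …, Bs (r-1), Cs 0, …, Cs (r-1), D)`, where the index `0 : Fin r` plays the role
of the index `1` of the paper. -/
def IsLanternPartitionOn (G : SimpleGraph V) (S : Set V) (r : ℕ)
    (A D : Set V) (Bs Cs : Fin r → Set V) : Prop :=
  (A ∪ D ∪ (⋃ i, Bs i) ∪ (⋃ i, Cs i)) = S ∧
  Disjoint A D ∧
  (∀ i, Disjoint A (Bs i) ∧ Disjoint A (Cs i) ∧ Disjoint D (Bs i) ∧ Disjoint D (Cs i)) ∧
  (∀ i j, Disjoint (Bs i) (Cs j)) ∧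
  (∀ i j, i ≠ j → Disjoint (Bs i) (Bs j) ∧ Disjoint (Cs i) (Cs j)) ∧
  A.Nonempty ∧ D.Nonempty ∧ (∀ i, (Bs i).Nonempty ∧ (Cs i).Nonempty) ∧
  G.IsClique A ∧ G.IsClique D ∧ (∀ i, G.IsClique (Bs i) ∧ G.IsClique (Cs i)) ∧
  AnticompleteTo G A D ∧
  (∀ i, CompleteTo G A (Bs i) ∧ AnticompleteTo G A (Cs i)) ∧
  (∀ i, CompleteTo G D (Cs i) ∧ AnticompleteTo G D (Bs i)) ∧
  (∀ i : Fin r, i.val = 0 → ChainedPairTo G (Bs i) (Cs i) ∧ ChainedPairTo G (Cs i) (Bs i)) ∧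
  (∀ i : Fin r, i.val ≠ 0 → CompleteTo G (Bs i) (Cs i)) ∧
  (∀ i j, i ≠ j → AnticompleteTo G (Bs i ∪ Cs i) (Bs j ∪ Cs j))

/-- The induced subgraph of `G` on `S` is a lantern. -/
def IsLanternOn (G : SimpleGraph V) (S : Set V) : Prop :=
  ∃ r : ℕ, 3 ≤ r ∧ ∃ (A D : Set V) (Bs Cs : Fin r → Set V),
    IsLanternPartitionOn G S r A D Bs Cs

/-- The induced subgraph of `G` on `S` is a thickened `Θ₃ʳ` with good partition
`(A, Bs, Cs, D)`. -/
def IsThickThetaPartitionOn (G : SimpleGraph V) (S : Set V) (r : ℕ)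
    (A D : Set V) (Bs Cs : Fin r → Set V) : Prop :=
  (A ∪ D ∪ (⋃ i, Bs i) ∪ (⋃ i, Cs i)) = S ∧
  Disjoint A D ∧
  (∀ i, Disjoint A (Bs i) ∧ Disjoint A (Cs i) ∧ Disjoint D (Bs i) ∧ Disjoint D (Cs i)) ∧
  (∀ i j, Disjoint (Bs i) (Cs j)) ∧
  (∀ i j, i ≠ j → Disjoint (Bs i) (Bs j) ∧ Disjoint (Cs i) (Cs j)) ∧
  A.Nonempty ∧ D.Nonempty ∧ (∀ i, (Bs i).Nonempty ∧ (Cs i).Nonempty) ∧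
  G.IsClique A ∧ G.IsClique D ∧ (∀ i, G.IsClique (Bs i) ∧ G.IsClique (Cs i)) ∧
  AnticompleteTo G A D ∧
  (∀ i, CompleteTo G A (Bs i) ∧ AnticompleteTo G A (Cs i)) ∧
  (∀ i, CompleteTo G D (Cs i) ∧ AnticompleteTo G D (Bs i)) ∧
  (∀ i, CompleteTo G (Bs i) (Cs i)) ∧
  (∀ i j, i ≠ j → AnticompleteTo G (Bs i ∪ Cs i) (Bs j ∪ Cs j))

/-- The induced subgraph of `G` on `S` is a `k`-ring with partition `X`. -/
def IsRingPartitionOn (G : SimpleGraph V) (S : Set V) (k : ℕ) (X : ZMod k → Set V) : Prop :=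
  (⋃ i, X i) = S ∧
  (∀ i j : ZMod k, i ≠ j → Disjoint (X i) (X j)) ∧
  (∀ i, (X i).Nonempty) ∧
  (∀ i, ∀ u ∈ X i, X i ⊆ cnbr G S u) ∧
  (∀ i, ∀ u ∈ X i, cnbr G S u ⊆ X (i - 1) ∪ X i ∪ X (i + 1)) ∧
  (∀ i, ∃ u ∈ X i, cnbr G S u = X (i - 1) ∪ X i ∪ X (i + 1)) ∧
  (∀ i, ∀ u ∈ X i, ∀ v ∈ X i, cnbr G S u ⊆ cnbr G S v ∨ cnbr G S v ⊆ cnbr G S u)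

/-- The induced subgraph of `G` on `S` is a ring (of some length `k ≥ 4`). -/
def IsRingOn (G : SimpleGraph V) (S : Set V) : Prop :=
  ∃ k : ℕ, 4 ≤ k ∧ ∃ X : ZMod k → Set V, IsRingPartitionOn G S k X

/-- The induced subgraph of `G` on `S` is a 6-ring. -/
def IsRing6On (G : SimpleGraph V) (S : Set V) : Prop :=
  ∃ X : ZMod 6 → Set V, IsRingPartitionOn G S 6 X

/-- The induced subgraph of `G` on `S` is a 6-wreath. -/
def IsWreath6On (G : SimpleGraph V) (S : Set V) : Prop :=
  ∃ X : ZMod 6 → Set V, IsRingPartitionOn G S 6 X ∧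
    CompleteTo G (X 0) (X 1) ∧ CompleteTo G (X 2) (X 3) ∧ CompleteTo G (X 4) (X 5)

/-- The induced subgraph of `G` on `S` is a 6-crown with good triple `(C, D, istar)`. -/
def IsCrownTripleOn (G : SimpleGraph V) (S : Set V) (C D : ZMod 6 → Set V)
    (istar : ZMod 6) : Prop :=
  ((⋃ i, C i) ∪ (⋃ i, D i)) = S ∧
  (∀ i j : ZMod 6, i ≠ j → Disjoint (C i) (C j) ∧ Disjoint (D i) (D j)) ∧
  (∀ i j : ZMod 6, Disjoint (C i) (D j)) ∧
  (∀ i, G.IsClique (C i) ∧ G.IsClique (D i)) ∧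
  (∀ i, (C i).Nonempty) ∧
  D (istar - 2) = ∅ ∧ D (istar - 1) = ∅ ∧
  (D (istar + 1)).Nonempty ∧ (D (istar + 2)).Nonempty ∧ (D (istar + 3)).Nonempty ∧
  (∀ i, CompleteTo G (C i) (C (i - 1) ∪ C (i + 1)) ∧
        AnticompleteTo G (C i) (C (i + 2) ∪ C (i + 3) ∪ C (i + 4))) ∧
  (∀ i, CompleteTo G (D i) (C (i - 1) ∪ C i ∪ C (i + 1)) ∧
        AnticompleteTo G (D i) (C (i + 2) ∪ C (i + 3) ∪ C (i + 4))) ∧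
  (∀ i j : ZMod 6, i ≠ j → AnticompleteTo G (D i) (D j))

/-- The induced subgraph of `G` on `S` is a 6-crown. -/
def IsCrown6On (G : SimpleGraph V) (S : Set V) : Prop :=
  ∃ C D istar, IsCrownTripleOn G S C D istar

/-- The set `X`: vertices outside `S` mixed on `S`. -/
def setX (G : SimpleGraph V) (S : Set V) : Set V :=
  {v | v ∉ S ∧ (∃ w ∈ S, G.Adj v w) ∧ ∃ w ∈ S, ¬ G.Adj v w}

/-- The set `L_A`: vertices of `X` with a neighbor in `A`, anticomplete to `S \ A`. -/
def setL (G : SimpleGraph V) (S A : Set V) : Set V :=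
  {v | v ∈ setX G S ∧ (∃ w ∈ A, G.Adj v w) ∧ ∀ w ∈ S \ A, ¬ G.Adj v w}

/-- The set `T_{B_i}` (for `A := A`, `Bi := B_i`, `Ci := C_i`): vertices of `X` complete to
`A ∪ B_i`, mixed on `C_i`, anticomplete to `S \ (A ∪ B_i ∪ C_i)`. -/
def setT (G : SimpleGraph V) (S A Bi Ci : Set V) : Set V :=
  {v | v ∈ setX G S ∧ (∀ w ∈ A ∪ Bi, G.Adj v w) ∧
       (∃ w ∈ Ci, G.Adj v w) ∧ (∃ w ∈ Ci, ¬ G.Adj v w) ∧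
       ∀ w ∈ S \ (A ∪ Bi ∪ Ci), ¬ G.Adj v w}

/-- The set `R_{B_i}`: vertices of `X` complete to `A`, with a neighbor in `B_i`,
anticomplete to `S \ (A ∪ B_i)`. -/
def setR (G : SimpleGraph V) (S A Bi : Set V) : Set V :=
  {v | v ∈ setX G S ∧ (∀ w ∈ A, G.Adj v w) ∧ (∃ w ∈ Bi, G.Adj v w) ∧
       ∀ w ∈ S \ (A ∪ Bi), ¬ G.Adj v w}

end Paper
open Paper
section ForbiddenHelpers

variable {V : Type*} {G : SimpleGraph V}

private def pickC4 (x0 x1 x2 x3 : V) : ZMod 4 → V := fun i => if i = 0 then x0 else if i = 1 then x1 else if i = 2 then x2 else x3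
private lemma pickC4_0 (x0 x1 x2 x3 : V) : pickC4 x0 x1 x2 x3 0 = x0 := by
  show (if (0:ZMod 4) = 0 then x0 else if (0:ZMod 4) = 1 then x1 else if (0:ZMod 4) = 2 then x2 else x3 : V) = _
  rw [if_pos rfl]
private lemma pickC4_1 (x0 x1 x2 x3 : V) : pickC4 x0 x1 x2 x3 1 = x1 := by
  show (if (1:ZMod 4) = 0 then x0 else if (1:ZMod 4) = 1 then x1 else if (1:ZMod 4) = 2 then x2 else x3 : V) = _
  rw [if_neg (by decide)]; rw [if_pos rfl]
private lemma pickC4_2 (x0 x1 x2 x3 : V) : pickC4 x0 x1 x2 x3 2 = x2 := by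
  show (if (2:ZMod 4) = 0 then x0 else if (2:ZMod 4) = 1 then x1 else if (2:ZMod 4) = 2 then x2 else x3 : V) = _
  rw [if_neg (by decide)]; rw [if_neg (by decide)]; rw [if_pos rfl]
private lemma pickC4_3 (x0 x1 x2 x3 : V) : pickC4 x0 x1 x2 x3 3 = x3 := by
  show (if (3:ZMod 4) = 0 then x0 else if (3:ZMod 4) = 1 then x1 else if (3:ZMod 4) = 2 then x2 else x3 : V) = _
  rw [if_neg (by decide)]; rw [if_neg (by decide)]; rw [if_neg (by decide)]
private lemma noC4 (hf : Paper.Free G (cycG 4)) (x0 x1 x2 x3 : V)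
    (e01 : G.Adj x0 x1) (e03 : G.Adj x0 x3) (e12 : G.Adj x1 x2) (e23 : G.Adj x2 x3) (n02 : ¬ G.Adj x0 x2) (n13 : ¬ G.Adj x1 x3) (m02 : x0 ≠ x2) (m13 : x1 ≠ x3) : False := by
  apply hf
  have enum : ∀ z : ZMod 4, z = 0 ∨ z = 1 ∨ z = 2 ∨ z = 3 := by decide
  refine ⟨⟨pickC4 x0 x1 x2 x3, ?_⟩, fun _ => Set.mem_univ _, ?_⟩
  · intro p q hpq
    rcases enum p with rfl|rfl|rfl|rfl <;> rcases enum q with rfl|rfl|rfl|rfl <;>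
      simp only [pickC4_0, pickC4_1, pickC4_2, pickC4_3] at hpq <;> first
      | rfl
      | (exact absurd hpq e01.ne)
      | (exact absurd hpq.symm e01.ne)
      | (exact absurd hpq e03.ne)
      | (exact absurd hpq.symm e03.ne)
      | (exact absurd hpq e12.ne)
      | (exact absurd hpq.symm e12.ne)
      | (exact absurd hpq e23.ne)
      | (exact absurd hpq.symm e23.ne)
      | (exact absurd hpq m02)
      | (exact absurd hpq.symm m02)
      | (exact absurd hpq m13)
      | (exact absurd hpq.symm m13)
  · intro p q
    show G.Adj (pickC4 x0 x1 x2 x3 p) (pickC4 x0 x1 x2 x3 q) ↔ _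
    rcases enum p with rfl|rfl|rfl|rfl <;> rcases enum q with rfl|rfl|rfl|rfl <;>
      simp only [Function.Embedding.coeFn_mk, pickC4_0, pickC4_1, pickC4_2, pickC4_3]
    · exact iff_of_false G.irrefl (fun h => absurd ((SimpleGraph.fromRel_adj _ _ _).mp h) (by decide))
    · exact iff_of_true e01 ((SimpleGraph.fromRel_adj _ _ _).mpr (by decide))
    · exact iff_of_false n02 (fun h => absurd ((SimpleGraph.fromRel_adj _ _ _).mp h) (by decide))
    · exact iff_of_true e03 ((SimpleGraph.fromRel_adj _ _ _).mpr (by decide))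
    · exact iff_of_true e01.symm ((SimpleGraph.fromRel_adj _ _ _).mpr (by decide))
    · exact iff_of_false G.irrefl (fun h => absurd ((SimpleGraph.fromRel_adj _ _ _).mp h) (by decide))
    · exact iff_of_true e12 ((SimpleGraph.fromRel_adj _ _ _).mpr (by decide))
    · exact iff_of_false n13 (fun h => absurd ((SimpleGraph.fromRel_adj _ _ _).mp h) (by decide))
    · exact iff_of_false (fun h => n02 h.symm) (fun h => absurd ((SimpleGraph.fromRel_adj _ _ _).mp h) (by decide))
    · exact iff_of_true e12.symm ((SimpleGraph.fromRel_adj _ _ _).mpr (by decide))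
    · exact iff_of_false G.irrefl (fun h => absurd ((SimpleGraph.fromRel_adj _ _ _).mp h) (by decide))
    · exact iff_of_true e23 ((SimpleGraph.fromRel_adj _ _ _).mpr (by decide))
    · exact iff_of_true e03.symm ((SimpleGraph.fromRel_adj _ _ _).mpr (by decide))
    · exact iff_of_false (fun h => n13 h.symm) (fun h => absurd ((SimpleGraph.fromRel_adj _ _ _).mp h) (by decide))
    · exact iff_of_true e23.symm ((SimpleGraph.fromRel_adj _ _ _).mpr (by decide))
    · exact iff_of_false G.irrefl (fun h => absurd ((SimpleGraph.fromRel_adj _ _ _).mp h) (by decide))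

private def pickC5 (x0 x1 x2 x3 x4 : V) : ZMod 5 → V := fun i => if i = 0 then x0 else if i = 1 then x1 else if i = 2 then x2 else if i = 3 then x3 else x4
private lemma pickC5_0 (x0 x1 x2 x3 x4 : V) : pickC5 x0 x1 x2 x3 x4 0 = x0 := by
  show (if (0:ZMod 5) = 0 then x0 else if (0:ZMod 5) = 1 then x1 else if (0:ZMod 5) = 2 then x2 else if (0:ZMod 5) = 3 then x3 else x4 : V) = _
  rw [if_pos rfl]
private lemma pickC5_1 (x0 x1 x2 x3 x4 : V) : pickC5 x0 x1 x2 x3 x4 1 = x1 := by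
  show (if (1:ZMod 5) = 0 then x0 else if (1:ZMod 5) = 1 then x1 else if (1:ZMod 5) = 2 then x2 else if (1:ZMod 5) = 3 then x3 else x4 : V) = _
  rw [if_neg (by decide)]; rw [if_pos rfl]
private lemma pickC5_2 (x0 x1 x2 x3 x4 : V) : pickC5 x0 x1 x2 x3 x4 2 = x2 := by
  show (if (2:ZMod 5) = 0 then x0 else if (2:ZMod 5) = 1 then x1 else if (2:ZMod 5) = 2 then x2 else if (2:ZMod 5) = 3 then x3 else x4 : V) = _
  rw [if_neg (by decide)]; rw [if_neg (by decide)]; rw [if_pos rfl]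
private lemma pickC5_3 (x0 x1 x2 x3 x4 : V) : pickC5 x0 x1 x2 x3 x4 3 = x3 := by
  show (if (3:ZMod 5) = 0 then x0 else if (3:ZMod 5) = 1 then x1 else if (3:ZMod 5) = 2 then x2 else if (3:ZMod 5) = 3 then x3 else x4 : V) = _
  rw [if_neg (by decide)]; rw [if_neg (by decide)]; rw [if_neg (by decide)]; rw [if_pos rfl]
private lemma pickC5_4 (x0 x1 x2 x3 x4 : V) : pickC5 x0 x1 x2 x3 x4 4 = x4 := by
  show (if (4:ZMod 5) = 0 then x0 else if (4:ZMod 5) = 1 then x1 else if (4:ZMod 5) = 2 then x2 else if (4:ZMod 5) = 3 then x3 else x4 : V) = _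
  rw [if_neg (by decide)]; rw [if_neg (by decide)]; rw [if_neg (by decide)]; rw [if_neg (by decide)]
private lemma noC5 (hf : Paper.Free G (cycG 5)) (x0 x1 x2 x3 x4 : V)
    (e01 : G.Adj x0 x1) (e04 : G.Adj x0 x4) (e12 : G.Adj x1 x2) (e23 : G.Adj x2 x3) (e34 : G.Adj x3 x4) (n02 : ¬ G.Adj x0 x2) (n03 : ¬ G.Adj x0 x3) (n13 : ¬ G.Adj x1 x3) (n14 : ¬ G.Adj x1 x4) (n24 : ¬ G.Adj x2 x4) (m02 : x0 ≠ x2) (m03 : x0 ≠ x3) (m13 : x1 ≠ x3) (m14 : x1 ≠ x4) (m24 : x2 ≠ x4) : False := by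
  apply hf
  have enum : ∀ z : ZMod 5, z = 0 ∨ z = 1 ∨ z = 2 ∨ z = 3 ∨ z = 4 := by decide
  refine ⟨⟨pickC5 x0 x1 x2 x3 x4, ?_⟩, fun _ => Set.mem_univ _, ?_⟩
  · intro p q hpq
    rcases enum p with rfl|rfl|rfl|rfl|rfl <;> rcases enum q with rfl|rfl|rfl|rfl|rfl <;>
      simp only [pickC5_0, pickC5_1, pickC5_2, pickC5_3, pickC5_4] at hpq <;> first
      | rfl
      | (exact absurd hpq e01.ne)
      | (exact absurd hpq.symm e01.ne)
      | (exact absurd hpq e04.ne)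
      | (exact absurd hpq.symm e04.ne)
      | (exact absurd hpq e12.ne)
      | (exact absurd hpq.symm e12.ne)
      | (exact absurd hpq e23.ne)
      | (exact absurd hpq.symm e23.ne)
      | (exact absurd hpq e34.ne)
      | (exact absurd hpq.symm e34.ne)
      | (exact absurd hpq m02)
      | (exact absurd hpq.symm m02)
      | (exact absurd hpq m03)
      | (exact absurd hpq.symm m03)
      | (exact absurd hpq m13)
      | (exact absurd hpq.symm m13)
      | (exact absurd hpq m14)
      | (exact absurd hpq.symm m14)
      | (exact absurd hpq m24)
      | (exact absurd hpq.symm m24)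
  · intro p q
    show G.Adj (pickC5 x0 x1 x2 x3 x4 p) (pickC5 x0 x1 x2 x3 x4 q) ↔ _
    rcases enum p with rfl|rfl|rfl|rfl|rfl <;> rcases enum q with rfl|rfl|rfl|rfl|rfl <;>
      simp only [Function.Embedding.coeFn_mk, pickC5_0, pickC5_1, pickC5_2, pickC5_3, pickC5_4]
    · exact iff_of_false G.irrefl (fun h => absurd ((SimpleGraph.fromRel_adj _ _ _).mp h) (by decide))
    · exact iff_of_true e01 ((SimpleGraph.fromRel_adj _ _ _).mpr (by decide))
    · exact iff_of_false n02 (fun h => absurd ((SimpleGraph.fromRel_adj _ _ _).mp h) (by decide))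
    · exact iff_of_false n03 (fun h => absurd ((SimpleGraph.fromRel_adj _ _ _).mp h) (by decide))
    · exact iff_of_true e04 ((SimpleGraph.fromRel_adj _ _ _).mpr (by decide))
    · exact iff_of_true e01.symm ((SimpleGraph.fromRel_adj _ _ _).mpr (by decide))
    · exact iff_of_false G.irrefl (fun h => absurd ((SimpleGraph.fromRel_adj _ _ _).mp h) (by decide))
    · exact iff_of_true e12 ((SimpleGraph.fromRel_adj _ _ _).mpr (by decide))
    · exact iff_of_false n13 (fun h => absurd ((SimpleGraph.fromRel_adj _ _ _).mp h) (by decide))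
    · exact iff_of_false n14 (fun h => absurd ((SimpleGraph.fromRel_adj _ _ _).mp h) (by decide))
    · exact iff_of_false (fun h => n02 h.symm) (fun h => absurd ((SimpleGraph.fromRel_adj _ _ _).mp h) (by decide))
    · exact iff_of_true e12.symm ((SimpleGraph.fromRel_adj _ _ _).mpr (by decide))
    · exact iff_of_false G.irrefl (fun h => absurd ((SimpleGraph.fromRel_adj _ _ _).mp h) (by decide))
    · exact iff_of_true e23 ((SimpleGraph.fromRel_adj _ _ _).mpr (by decide))
    · exact iff_of_false n24 (fun h => absurd ((SimpleGraph.fromRel_adj _ _ _).mp h) (by decide))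
    · exact iff_of_false (fun h => n03 h.symm) (fun h => absurd ((SimpleGraph.fromRel_adj _ _ _).mp h) (by decide))
    · exact iff_of_false (fun h => n13 h.symm) (fun h => absurd ((SimpleGraph.fromRel_adj _ _ _).mp h) (by decide))
    · exact iff_of_true e23.symm ((SimpleGraph.fromRel_adj _ _ _).mpr (by decide))
    · exact iff_of_false G.irrefl (fun h => absurd ((SimpleGraph.fromRel_adj _ _ _).mp h) (by decide))
    · exact iff_of_true e34 ((SimpleGraph.fromRel_adj _ _ _).mpr (by decide))
    · exact iff_of_true e04.symm ((SimpleGraph.fromRel_adj _ _ _).mpr (by decide))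
    · exact iff_of_false (fun h => n14 h.symm) (fun h => absurd ((SimpleGraph.fromRel_adj _ _ _).mp h) (by decide))
    · exact iff_of_false (fun h => n24 h.symm) (fun h => absurd ((SimpleGraph.fromRel_adj _ _ _).mp h) (by decide))
    · exact iff_of_true e34.symm ((SimpleGraph.fromRel_adj _ _ _).mpr (by decide))
    · exact iff_of_false G.irrefl (fun h => absurd ((SimpleGraph.fromRel_adj _ _ _).mp h) (by decide))

private def pickP7 (x0 x1 x2 x3 x4 x5 x6 : V) : Fin 7 → V := fun i => if i = 0 then x0 else if i = 1 then x1 else if i = 2 then x2 else if i = 3 then x3 else if i = 4 then x4 else if i = 5 then x5 else x6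
private lemma pickP7_0 (x0 x1 x2 x3 x4 x5 x6 : V) : pickP7 x0 x1 x2 x3 x4 x5 x6 0 = x0 := by
  show (if (0:Fin 7) = 0 then x0 else if (0:Fin 7) = 1 then x1 else if (0:Fin 7) = 2 then x2 else if (0:Fin 7) = 3 then x3 else if (0:Fin 7) = 4 then x4 else if (0:Fin 7) = 5 then x5 else x6 : V) = _
  rw [if_pos rfl]
private lemma pickP7_1 (x0 x1 x2 x3 x4 x5 x6 : V) : pickP7 x0 x1 x2 x3 x4 x5 x6 1 = x1 := by
  show (if (1:Fin 7) = 0 then x0 else if (1:Fin 7) = 1 then x1 else if (1:Fin 7) = 2 then x2 else if (1:Fin 7) = 3 then x3 else if (1:Fin 7) = 4 then x4 else if (1:Fin 7) = 5 then x5 else x6 : V) = _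
  rw [if_neg (by decide)]; rw [if_pos rfl]
private lemma pickP7_2 (x0 x1 x2 x3 x4 x5 x6 : V) : pickP7 x0 x1 x2 x3 x4 x5 x6 2 = x2 := by
  show (if (2:Fin 7) = 0 then x0 else if (2:Fin 7) = 1 then x1 else if (2:Fin 7) = 2 then x2 else if (2:Fin 7) = 3 then x3 else if (2:Fin 7) = 4 then x4 else if (2:Fin 7) = 5 then x5 else x6 : V) = _
  rw [if_neg (by decide)]; rw [if_neg (by decide)]; rw [if_pos rfl]
private lemma pickP7_3 (x0 x1 x2 x3 x4 x5 x6 : V) : pickP7 x0 x1 x2 x3 x4 x5 x6 3 = x3 := by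
  show (if (3:Fin 7) = 0 then x0 else if (3:Fin 7) = 1 then x1 else if (3:Fin 7) = 2 then x2 else if (3:Fin 7) = 3 then x3 else if (3:Fin 7) = 4 then x4 else if (3:Fin 7) = 5 then x5 else x6 : V) = _
  rw [if_neg (by decide)]; rw [if_neg (by decide)]; rw [if_neg (by decide)]; rw [if_pos rfl]
private lemma pickP7_4 (x0 x1 x2 x3 x4 x5 x6 : V) : pickP7 x0 x1 x2 x3 x4 x5 x6 4 = x4 := by
  show (if (4:Fin 7) = 0 then x0 else if (4:Fin 7) = 1 then x1 else if (4:Fin 7) = 2 then x2 else if (4:Fin 7) = 3 then x3 else if (4:Fin 7) = 4 then x4 else if (4:Fin 7) = 5 then x5 else x6 : V) = _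
  rw [if_neg (by decide)]; rw [if_neg (by decide)]; rw [if_neg (by decide)]; rw [if_neg (by decide)]; rw [if_pos rfl]
private lemma pickP7_5 (x0 x1 x2 x3 x4 x5 x6 : V) : pickP7 x0 x1 x2 x3 x4 x5 x6 5 = x5 := by
  show (if (5:Fin 7) = 0 then x0 else if (5:Fin 7) = 1 then x1 else if (5:Fin 7) = 2 then x2 else if (5:Fin 7) = 3 then x3 else if (5:Fin 7) = 4 then x4 else if (5:Fin 7) = 5 then x5 else x6 : V) = _
  rw [if_neg (by decide)]; rw [if_neg (by decide)]; rw [if_neg (by decide)]; rw [if_neg (by decide)]; rw [if_neg (by decide)]; rw [if_pos rfl]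
private lemma pickP7_6 (x0 x1 x2 x3 x4 x5 x6 : V) : pickP7 x0 x1 x2 x3 x4 x5 x6 6 = x6 := by
  show (if (6:Fin 7) = 0 then x0 else if (6:Fin 7) = 1 then x1 else if (6:Fin 7) = 2 then x2 else if (6:Fin 7) = 3 then x3 else if (6:Fin 7) = 4 then x4 else if (6:Fin 7) = 5 then x5 else x6 : V) = _
  rw [if_neg (by decide)]; rw [if_neg (by decide)]; rw [if_neg (by decide)]; rw [if_neg (by decide)]; rw [if_neg (by decide)]; rw [if_neg (by decide)]
private lemma noP7 (hf : Paper.Free G (pathG 7)) (x0 x1 x2 x3 x4 x5 x6 : V)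
    (e01 : G.Adj x0 x1) (e12 : G.Adj x1 x2) (e23 : G.Adj x2 x3) (e34 : G.Adj x3 x4) (e45 : G.Adj x4 x5) (e56 : G.Adj x5 x6) (n02 : ¬ G.Adj x0 x2) (n03 : ¬ G.Adj x0 x3) (n04 : ¬ G.Adj x0 x4) (n05 : ¬ G.Adj x0 x5) (n06 : ¬ G.Adj x0 x6) (n13 : ¬ G.Adj x1 x3) (n14 : ¬ G.Adj x1 x4) (n15 : ¬ G.Adj x1 x5) (n16 : ¬ G.Adj x1 x6) (n24 : ¬ G.Adj x2 x4) (n25 : ¬ G.Adj x2 x5) (n26 : ¬ G.Adj x2 x6) (n35 : ¬ G.Adj x3 x5) (n36 : ¬ G.Adj x3 x6) (n46 : ¬ G.Adj x4 x6) (m02 : x0 ≠ x2) (m03 : x0 ≠ x3) (m04 : x0 ≠ x4) (m05 : x0 ≠ x5) (m06 : x0 ≠ x6) (m13 : x1 ≠ x3) (m14 : x1 ≠ x4) (m15 : x1 ≠ x5) (m16 : x1 ≠ x6) (m24 : x2 ≠ x4) (m25 : x2 ≠ x5) (m26 : x2 ≠ x6) (m35 : x3 ≠ x5) (m36 : x3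 ≠ x6) (m46 : x4 ≠ x6) : False := by
  apply hf
  have enum : ∀ z : Fin 7, z = 0 ∨ z = 1 ∨ z = 2 ∨ z = 3 ∨ z = 4 ∨ z = 5 ∨ z = 6 := by decide
  refine ⟨⟨pickP7 x0 x1 x2 x3 x4 x5 x6, ?_⟩, fun _ => Set.mem_univ _, ?_⟩
  · intro p q hpq
    rcases enum p with rfl|rfl|rfl|rfl|rfl|rfl|rfl <;> rcases enum q with rfl|rfl|rfl|rfl|rfl|rfl|rfl <;>
      simp only [pickP7_0, pickP7_1, pickP7_2, pickP7_3, pickP7_4, pickP7_5, pickP7_6] at hpq <;> first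
      | rfl
      | (exact absurd hpq e01.ne)
      | (exact absurd hpq.symm e01.ne)
      | (exact absurd hpq e12.ne)
      | (exact absurd hpq.symm e12.ne)
      | (exact absurd hpq e23.ne)
      | (exact absurd hpq.symm e23.ne)
      | (exact absurd hpq e34.ne)
      | (exact absurd hpq.symm e34.ne)
      | (exact absurd hpq e45.ne)
      | (exact absurd hpq.symm e45.ne)
      | (exact absurd hpq e56.ne)
      | (exact absurd hpq.symm e56.ne)
      | (exact absurd hpq m02)
      | (exact absurd hpq.symm m02)
      | (exact absurd hpq m03)
      | (exact absurd hpq.symm m03)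
      | (exact absurd hpq m04)
      | (exact absurd hpq.symm m04)
      | (exact absurd hpq m05)
      | (exact absurd hpq.symm m05)
      | (exact absurd hpq m06)
      | (exact absurd hpq.symm m06)
      | (exact absurd hpq m13)
      | (exact absurd hpq.symm m13)
      | (exact absurd hpq m14)
      | (exact absurd hpq.symm m14)
      | (exact absurd hpq m15)
      | (exact absurd hpq.symm m15)
      | (exact absurd hpq m16)
      | (exact absurd hpq.symm m16)
      | (exact absurd hpq m24)
      | (exact absurd hpq.symm m24)
      | (exact absurd hpq m25)
      | (exact absurd hpq.symm m25)
      | (exact absurd hpq m26)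
      | (exact absurd hpq.symm m26)
      | (exact absurd hpq m35)
      | (exact absurd hpq.symm m35)
      | (exact absurd hpq m36)
      | (exact absurd hpq.symm m36)
      | (exact absurd hpq m46)
      | (exact absurd hpq.symm m46)
  · intro p q
    show G.Adj (pickP7 x0 x1 x2 x3 x4 x5 x6 p) (pickP7 x0 x1 x2 x3 x4 x5 x6 q) ↔ _
    rcases enum p with rfl|rfl|rfl|rfl|rfl|rfl|rfl <;> rcases enum q with rfl|rfl|rfl|rfl|rfl|rfl|rfl <;>
      simp only [Function.Embedding.coeFn_mk, pickP7_0, pickP7_1, pickP7_2, pickP7_3, pickP7_4, pickP7_5, pickP7_6]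
    · exact iff_of_false G.irrefl (fun h => absurd ((SimpleGraph.fromRel_adj _ _ _).mp h) (by decide))
    · exact iff_of_true e01 ((SimpleGraph.fromRel_adj _ _ _).mpr (by decide))
    · exact iff_of_false n02 (fun h => absurd ((SimpleGraph.fromRel_adj _ _ _).mp h) (by decide))
    · exact iff_of_false n03 (fun h => absurd ((SimpleGraph.fromRel_adj _ _ _).mp h) (by decide))
    · exact iff_of_false n04 (fun h => absurd ((SimpleGraph.fromRel_adj _ _ _).mp h) (by decide))
    · exact iff_of_false n05 (fun h => absurd ((SimpleGraph.fromRel_adj _ _ _).mp h) (by decide))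
    · exact iff_of_false n06 (fun h => absurd ((SimpleGraph.fromRel_adj _ _ _).mp h) (by decide))
    · exact iff_of_true e01.symm ((SimpleGraph.fromRel_adj _ _ _).mpr (by decide))
    · exact iff_of_false G.irrefl (fun h => absurd ((SimpleGraph.fromRel_adj _ _ _).mp h) (by decide))
    · exact iff_of_true e12 ((SimpleGraph.fromRel_adj _ _ _).mpr (by decide))
    · exact iff_of_false n13 (fun h => absurd ((SimpleGraph.fromRel_adj _ _ _).mp h) (by decide))
    · exact iff_of_false n14 (fun h => absurd ((SimpleGraph.fromRel_adj _ _ _).mp h) (by decide))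
    · exact iff_of_false n15 (fun h => absurd ((SimpleGraph.fromRel_adj _ _ _).mp h) (by decide))
    · exact iff_of_false n16 (fun h => absurd ((SimpleGraph.fromRel_adj _ _ _).mp h) (by decide))
    · exact iff_of_false (fun h => n02 h.symm) (fun h => absurd ((SimpleGraph.fromRel_adj _ _ _).mp h) (by decide))
    · exact iff_of_true e12.symm ((SimpleGraph.fromRel_adj _ _ _).mpr (by decide))
    · exact iff_of_false G.irrefl (fun h => absurd ((SimpleGraph.fromRel_adj _ _ _).mp h) (by decide))
    · exact iff_of_true e23 ((SimpleGraph.fromRel_adj _ _ _).mpr (by decide))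
    · exact iff_of_false n24 (fun h => absurd ((SimpleGraph.fromRel_adj _ _ _).mp h) (by decide))
    · exact iff_of_false n25 (fun h => absurd ((SimpleGraph.fromRel_adj _ _ _).mp h) (by decide))
    · exact iff_of_false n26 (fun h => absurd ((SimpleGraph.fromRel_adj _ _ _).mp h) (by decide))
    · exact iff_of_false (fun h => n03 h.symm) (fun h => absurd ((SimpleGraph.fromRel_adj _ _ _).mp h) (by decide))
    · exact iff_of_false (fun h => n13 h.symm) (fun h => absurd ((SimpleGraph.fromRel_adj _ _ _).mp h) (by decide))
    · exact iff_of_true e23.symm ((SimpleGraph.fromRel_adj _ _ _).mpr (by decide))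
    · exact iff_of_false G.irrefl (fun h => absurd ((SimpleGraph.fromRel_adj _ _ _).mp h) (by decide))
    · exact iff_of_true e34 ((SimpleGraph.fromRel_adj _ _ _).mpr (by decide))
    · exact iff_of_false n35 (fun h => absurd ((SimpleGraph.fromRel_adj _ _ _).mp h) (by decide))
    · exact iff_of_false n36 (fun h => absurd ((SimpleGraph.fromRel_adj _ _ _).mp h) (by decide))
    · exact iff_of_false (fun h => n04 h.symm) (fun h => absurd ((SimpleGraph.fromRel_adj _ _ _).mp h) (by decide))
    · exact iff_of_false (fun h => n14 h.symm) (fun h => absurd ((SimpleGraph.fromRel_adj _ _ _).mp h) (by decide))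
    · exact iff_of_false (fun h => n24 h.symm) (fun h => absurd ((SimpleGraph.fromRel_adj _ _ _).mp h) (by decide))
    · exact iff_of_true e34.symm ((SimpleGraph.fromRel_adj _ _ _).mpr (by decide))
    · exact iff_of_false G.irrefl (fun h => absurd ((SimpleGraph.fromRel_adj _ _ _).mp h) (by decide))
    · exact iff_of_true e45 ((SimpleGraph.fromRel_adj _ _ _).mpr (by decide))
    · exact iff_of_false n46 (fun h => absurd ((SimpleGraph.fromRel_adj _ _ _).mp h) (by decide))
    · exact iff_of_false (fun h => n05 h.symm) (fun h => absurd ((SimpleGraph.fromRel_adj _ _ _).mp h) (by decide))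
    · exact iff_of_false (fun h => n15 h.symm) (fun h => absurd ((SimpleGraph.fromRel_adj _ _ _).mp h) (by decide))
    · exact iff_of_false (fun h => n25 h.symm) (fun h => absurd ((SimpleGraph.fromRel_adj _ _ _).mp h) (by decide))
    · exact iff_of_false (fun h => n35 h.symm) (fun h => absurd ((SimpleGraph.fromRel_adj _ _ _).mp h) (by decide))
    · exact iff_of_true e45.symm ((SimpleGraph.fromRel_adj _ _ _).mpr (by decide))
    · exact iff_of_false G.irrefl (fun h => absurd ((SimpleGraph.fromRel_adj _ _ _).mp h) (by decide))
    · exact iff_of_true e56 ((SimpleGraph.fromRel_adj _ _ _).mpr (by decide))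
    · exact iff_of_false (fun h => n06 h.symm) (fun h => absurd ((SimpleGraph.fromRel_adj _ _ _).mp h) (by decide))
    · exact iff_of_false (fun h => n16 h.symm) (fun h => absurd ((SimpleGraph.fromRel_adj _ _ _).mp h) (by decide))
    · exact iff_of_false (fun h => n26 h.symm) (fun h => absurd ((SimpleGraph.fromRel_adj _ _ _).mp h) (by decide))
    · exact iff_of_false (fun h => n36 h.symm) (fun h => absurd ((SimpleGraph.fromRel_adj _ _ _).mp h) (by decide))
    · exact iff_of_false (fun h => n46 h.symm) (fun h => absurd ((SimpleGraph.fromRel_adj _ _ _).mp h) (by decide))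
    · exact iff_of_true e56.symm ((SimpleGraph.fromRel_adj _ _ _).mpr (by decide))
    · exact iff_of_false G.irrefl (fun h => absurd ((SimpleGraph.fromRel_adj _ _ _).mp h) (by decide))

end ForbiddenHelpers
section AuxLemmas
variable {V : Type*} {G : SimpleGraph V}

private lemma ne_of_disj {X Y : Set V} (h : Disjoint X Y) {x y : V} (hx : x ∈ X) (hy : y ∈ Y) :
    x ≠ y := fun e => Set.disjoint_left.mp h hx (e ▸ hy)

private lemma exists_two_others {r : ℕ} (hr : 3 ≤ r) (i : Fin r) :
    ∃ j k : Fin r, j ≠ k ∧ j ≠ i ∧ k ≠ i := by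
  have h0 : (0:ℕ) < r := by omega
  have h1 : (1:ℕ) < r := by omega
  have h2 : (2:ℕ) < r := by omega
  have n01 : (⟨0, h0⟩ : Fin r) ≠ ⟨1, h1⟩ := by simp [Fin.ext_iff]
  have n02 : (⟨0, h0⟩ : Fin r) ≠ ⟨2, h2⟩ := by simp [Fin.ext_iff]
  have n12 : (⟨1, h1⟩ : Fin r) ≠ ⟨2, h2⟩ := by simp [Fin.ext_iff]
  rcases eq_or_ne i ⟨0, h0⟩ with h|ha
  · subst h; exact ⟨_, _, n12, n01.symm, n02.symm⟩
  rcases eq_or_ne i ⟨1, h1⟩ with h|hb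
  · subst h; exact ⟨_, _, n02, n01, n12.symm⟩
  exact ⟨_, _, n01, ha.symm, hb.symm⟩

private lemma exists_third {r : ℕ} (hr : 3 ≤ r) (i j : Fin r) :
    ∃ k : Fin r, k ≠ i ∧ k ≠ j := by
  have h0 : (0:ℕ) < r := by omega
  have h1 : (1:ℕ) < r := by omega
  have h2 : (2:ℕ) < r := by omega
  have n01 : (⟨0, h0⟩ : Fin r) ≠ ⟨1, h1⟩ := by simp [Fin.ext_iff]
  have n02 : (⟨0, h0⟩ : Fin r) ≠ ⟨2, h2⟩ := by simp [Fin.ext_iff]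
  have n12 : (⟨1, h1⟩ : Fin r) ≠ ⟨2, h2⟩ := by simp [Fin.ext_iff]
  by_cases a0 : (⟨0, h0⟩ : Fin r) ≠ i ∧ (⟨0, h0⟩ : Fin r) ≠ j
  · exact ⟨_, a0⟩
  by_cases a1 : (⟨1, h1⟩ : Fin r) ≠ i ∧ (⟨1, h1⟩ : Fin r) ≠ j
  · exact ⟨_, a1⟩
  rw [not_and_or, not_ne_iff, not_ne_iff] at a0 a1
  rcases a0 with h|h
  · subst h
    rcases a1 with h'|h'
    · exact absurd h' n01.symm
    · subst h'; exact ⟨_, n02.symm, n12.symm⟩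
  · subst h
    rcases a1 with h'|h'
    · subst h'; exact ⟨_, n12.symm, n02.symm⟩
    · exact absurd h' n01.symm

private lemma swapTT {r : ℕ} {S A D : Set V} {Bs Cs : Fin r → Set V}
    (h : IsThickThetaPartitionOn G S r A D Bs Cs) :
    IsThickThetaPartitionOn G S r D A Cs Bs := by
  obtain ⟨hUn, hAD, hd, hBC, hBB, hAne, hDne, hBCne, hAcl, hDcl, hBCcl, haAD, hAB, hDC, hBiCi, hP⟩ := h
  refine ⟨?_, hAD.symm, ?_, ?_, ?_, hDne, hAne, ?_, hDcl, hAcl, ?_, ?_, hDC, hAB, ?_, ?_⟩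
  · rw [← hUn]; ext x; simp only [Set.mem_union, Set.mem_iUnion]; tauto
  · exact fun i => ⟨(hd i).2.2.2, (hd i).2.2.1, (hd i).2.1, (hd i).1⟩
  · exact fun i j => (hBC j i).symm
  · exact fun i j hij => ⟨(hBB i j hij).2, (hBB i j hij).1⟩
  · exact fun i => ⟨(hBCne i).2, (hBCne i).1⟩
  · exact fun i => ⟨(hBCcl i).2, (hBCcl i).1⟩
  · exact fun d hd' a ha hadj => haAD a ha d hd' hadj.symm
  · exact fun i c hc b hb => ((hBiCi i) b hb c hc).symm
  · intro i j hij x hx y hy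
    exact hP i j hij x (hx.elim Or.inr Or.inl) y (hy.elim Or.inr Or.inl)

end AuxLemmas
section ExtendLemmas
variable {V : Type*} {G : SimpleGraph V}

private lemma disj_insert_left {a : V} {s t : Set V} (h1 : a ∉ t) (h2 : Disjoint s t) :
    Disjoint (insert a s) t := by
  rw [Set.disjoint_left]
  rintro x (rfl|hx)
  · exact h1
  · exact Set.disjoint_left.mp h2 hx

private lemma disj_insert_right {a : V} {s t : Set V} (h1 : a ∉ s) (h2 : Disjoint s t) :
    Disjoint s (insert a t) := (disj_insert_left h1 h2.symm).symm

private lemma extendA_false {r : ℕ} {S A D : Set V} {Bs Cs : Fin r → Set V}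
    (hT : IsThickThetaPartitionOn G S r A D Bs Cs)
    (hmax : ∀ S' : Set V, S ⊆ S' → (∃ (A' D' : Set V) (Bs' Cs' : Fin r → Set V),
        IsThickThetaPartitionOn G S' r A' D' Bs' Cs') → S' = S)
    (v : V) (hvS : v ∉ S)
    (hvA : ∀ a ∈ A, G.Adj v a) (hvB : ∀ i, ∀ b ∈ Bs i, G.Adj v b)
    (hvD : ∀ d ∈ D, ¬ G.Adj v d) (hvC : ∀ i, ∀ c ∈ Cs i, ¬ G.Adj v c) : False := by
  obtain ⟨hUn, hAD, hd, hBC, hBB, hAne, hDne, hBCne, hAcl, hDcl, hBCcl, haAD, hAB, hDC,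
    hBiCi, hP⟩ := hT
  have hDS : D ⊆ S := by
    intro x hx; rw [← hUn]; exact Or.inl (Or.inl (Or.inr hx))
  have hBSm : ∀ i, Bs i ⊆ S := by
    intro i x hx; rw [← hUn]
    exact Or.inl (Or.inr (Set.mem_iUnion.mpr ⟨i, hx⟩))
  have hCSm : ∀ i, Cs i ⊆ S := by
    intro i x hx; rw [← hUn]
    exact Or.inr (Set.mem_iUnion.mpr ⟨i, hx⟩)
  have key : IsThickThetaPartitionOn G (insert v S) r (insert v A) D Bs Cs := by
    refine ⟨?_, ?_, ?_, hBC, hBB, ⟨v, Set.mem_insert _ _⟩, hDne, hBCne, ?_, hDcl, hBCcl,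
      ?_, ?_, hDC, hBiCi, hP⟩
    · rw [Set.insert_union, Set.insert_union, Set.insert_union, hUn]
    · exact disj_insert_left (fun h => hvS (hDS h)) hAD
    · intro i
      refine ⟨?_, ?_, (hd i).2.2.1, (hd i).2.2.2⟩
      · exact disj_insert_left (fun h => hvS (hBSm i h)) (hd i).1
      · exact disj_insert_left (fun h => hvS (hCSm i h)) (hd i).2.1
    · exact hAcl.insert (fun b hb _ => hvA b hb)
    · intro x hx d hd'
      rcases hx with rfl|hx
      · exact hvD d hd'
      · exact haAD x hx d hd'
    · intro i
      constructor
      · intro x hx b hb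
        rcases hx with rfl|hx
        · exact hvB i b hb
        · exact (hAB i).1 x hx b hb
      · intro x hx c hc
        rcases hx with rfl|hx
        · exact hvC i c hc
        · exact (hAB i).2 x hx c hc
  have heq := hmax (insert v S) (Set.subset_insert _ _) ⟨_, _, _, _, key⟩
  exact hvS (heq ▸ Set.mem_insert v S)

private lemma extendB_false {r : ℕ} {S A D : Set V} {Bs Cs : Fin r → Set V}
    (hT : IsThickThetaPartitionOn G S r A D Bs Cs)
    (hmax : ∀ S' : Set V, S ⊆ S' → (∃ (A' D' : Set V) (Bs' Cs' : Fin r → Set V),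
        IsThickThetaPartitionOn G S' r A' D' Bs' Cs') → S' = S)
    (i : Fin r) (v : V) (hvS : v ∉ S)
    (hvA : ∀ a ∈ A, G.Adj v a) (hvBi : ∀ b ∈ Bs i, G.Adj v b) (hvCi : ∀ c ∈ Cs i, G.Adj v c)
    (hvD : ∀ d ∈ D, ¬ G.Adj v d)
    (hvO : ∀ j, j ≠ i → (∀ b ∈ Bs j, ¬ G.Adj v b) ∧ (∀ c ∈ Cs j, ¬ G.Adj v c)) : False := by
  obtain ⟨hUn, hAD, hd, hBC, hBB, hAne, hDne, hBCne, hAcl, hDcl, hBCcl, haAD, hAB, hDC,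
    hBiCi, hP⟩ := hT
  have hAS : A ⊆ S := by
    intro x hx; rw [← hUn]; exact Or.inl (Or.inl (Or.inl hx))
  have hDS : D ⊆ S := by
    intro x hx; rw [← hUn]; exact Or.inl (Or.inl (Or.inr hx))
  have hBSm : ∀ j, Bs j ⊆ S := by
    intro j x hx; rw [← hUn]
    exact Or.inl (Or.inr (Set.mem_iUnion.mpr ⟨j, hx⟩))
  have hCSm : ∀ j, Cs j ⊆ S := by
    intro j x hx; rw [← hUn]
    exact Or.inr (Set.mem_iUnion.mpr ⟨j, hx⟩)
  set Bs' : Fin r → Set V := fun j => if j = i then insert v (Bs i) else Bs j with hBsdef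
  have hBs'i : Bs' i = insert v (Bs i) := by simp [Bs']
  have hBs'ne : ∀ j, j ≠ i → Bs' j = Bs j := by intro j hj; simp [Bs', hj]
  have hmemB : ∀ j x, x ∈ Bs' j → (j = i ∧ x = v) ∨ x ∈ Bs j := by
    intro j x hx
    by_cases h : j = i
    · subst h; rw [hBs'i] at hx
      rcases hx with rfl|hx
      · exact Or.inl ⟨rfl, rfl⟩
      · exact Or.inr hx
    · rw [hBs'ne j h] at hx; exact Or.inr hx
  have key : IsThickThetaPartitionOn G (insert v S) r A D Bs' Cs := by
    refine ⟨?_, hAD, ?_, ?_, ?_, hAne, hDne, ?_, hAcl, hDcl, ?_, haAD, ?_, ?_, ?_, ?_⟩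
    · have hU : (⋃ j, Bs' j) = insert v (⋃ j, Bs j) := by
        ext x
        simp only [Set.mem_iUnion, Set.mem_insert_iff]
        constructor
        · rintro ⟨j, hj⟩
          rcases hmemB j x hj with ⟨rfl, rfl⟩|hj'
          · exact Or.inl rfl
          · exact Or.inr ⟨j, hj'⟩
        · rintro (rfl|⟨j, hj⟩)
          · exact ⟨i, by rw [hBs'i]; exact Set.mem_insert _ _⟩
          · by_cases h : j = i
            · subst h; exact ⟨j, by rw [hBs'i]; exact Set.mem_insert_of_mem _ hj⟩
            · exact ⟨j, by rw [hBs'ne j h]; exact hj⟩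
      rw [hU, Set.union_insert, Set.insert_union, hUn]
    · intro j
      by_cases h : j = i
      · subst h
        rw [hBs'i]
        refine ⟨?_, (hd j).2.1, ?_, (hd j).2.2.2⟩
        · exact disj_insert_right (fun hx => hvS (hAS hx)) (hd j).1
        · exact disj_insert_right (fun hx => hvS (hDS hx)) (hd j).2.2.1
      · rw [hBs'ne j h]; exact hd j
    · intro p q
      by_cases h : p = i
      · subst h; rw [hBs'i]
        exact disj_insert_left (fun hx => hvS (hCSm q hx)) (hBC p q)
      · rw [hBs'ne p h]; exact hBC p q
    · intro p q hpq
      refine ⟨?_, (hBB p q hpq).2⟩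
      by_cases h : p = i
      · have hq : q ≠ i := fun e => hpq (h.trans e.symm)
        rw [h, hBs'i, hBs'ne q hq]
        exact disj_insert_left (fun hx => hvS (hBSm q hx)) (h ▸ (hBB p q hpq).1)
      · by_cases h' : q = i
        · rw [hBs'ne p h, h', hBs'i]
          exact disj_insert_right (fun hx => hvS (hBSm p hx)) (h' ▸ (hBB p q hpq).1)
        · rw [hBs'ne p h, hBs'ne q h']; exact (hBB p q hpq).1
    · intro j
      by_cases h : j = i
      · subst h; rw [hBs'i]; exact ⟨Set.insert_nonempty _ _, (hBCne j).2⟩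
      · rw [hBs'ne j h]; exact hBCne j
    · intro j
      by_cases h : j = i
      · subst h; rw [hBs'i]
        exact ⟨(hBCcl j).1.insert (fun b hb _ => hvBi b hb), (hBCcl j).2⟩
      · rw [hBs'ne j h]; exact hBCcl j
    · intro j
      refine ⟨?_, (hAB j).2⟩
      intro a ha b hb
      rcases hmemB j b hb with ⟨rfl, rfl⟩|hb'
      · exact (hvA a ha).symm
      · exact (hAB j).1 a ha b hb'
    · intro j
      refine ⟨(hDC j).1, ?_⟩
      intro d hd' b hb
      rcases hmemB j b hb with ⟨rfl, rfl⟩|hb'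
      · exact fun h => hvD d hd' h.symm
      · exact (hDC j).2 d hd' b hb'
    · intro j x hx c hc
      rcases hmemB j x hx with ⟨rfl, rfl⟩|hx'
      · exact hvCi c hc
      · exact hBiCi j x hx' c hc
    · intro p q hpq x hx y hy
      have hx' : (p = i ∧ x = v) ∨ x ∈ Bs p ∪ Cs p := by
        rcases hx with hx|hx
        · rcases hmemB p x hx with h|h
          · exact Or.inl h
          · exact Or.inr (Or.inl h)
        · exact Or.inr (Or.inr hx)
      have hy' : (q = i ∧ y = v) ∨ y ∈ Bs q ∪ Cs q := by
        rcases hy with hy|hy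
        · rcases hmemB q y hy with h|h
          · exact Or.inl h
          · exact Or.inr (Or.inl h)
        · exact Or.inr (Or.inr hy)
      rcases hx' with ⟨hpi, rfl⟩|hx'
      · rcases hy' with ⟨hqi, rfl⟩|hy'
        · exact absurd (hpi.trans hqi.symm) hpq
        · have hq : q ≠ i := fun e => hpq (hpi.trans e.symm)
          rcases hy' with hy'|hy'
          · exact (hvO q hq).1 y hy'
          · exact (hvO q hq).2 y hy'
      · rcases hy' with ⟨hqi, rfl⟩|hy'
        · have hp : p ≠ i := fun e => hpq (e.trans hqi.symm)
          intro hadj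
          rcases hx' with hx'|hx'
          · exact (hvO p hp).1 x hx' hadj.symm
          · exact (hvO p hp).2 x hx' hadj.symm
        · exact hP p q hpq x hx' y hy'
  have heq := hmax (insert v S) (Set.subset_insert _ _) ⟨_, _, _, _, key⟩
  exact hvS (heq ▸ Set.mem_insert v S)

end ExtendLemmas
section MainLemmas
variable {V : Type*} {G : SimpleGraph V}

private lemma claim1 {r : ℕ} {S A D : Set V} {Bs Cs : Fin r → Set V}
    (h4 : Paper.Free G (cycG 4)) (h5 : Paper.Free G (cycG 5)) (hr : 3 ≤ r)
    (hT : IsThickThetaPartitionOn G S r A D Bs Cs)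
    {v : V} (hv : v ∈ setX G S)
    {a : V} (ha : a ∈ A) (hva : G.Adj v a)
    {d : V} (hd' : d ∈ D) (hvd : G.Adj v d) : False := by
  obtain ⟨hUn, hAD, hd, hBC, hBB, hAne, hDne, hBCne, hAcl, hDcl, hBCcl, haAD, hAB, hDC,
    hBiCi, hP⟩ := hT
  have hvS : v ∉ S := hv.1
  have hAS : A ⊆ S := by
    intro x hx; rw [← hUn]; exact Or.inl (Or.inl (Or.inl hx))
  have hDS : D ⊆ S := by
    intro x hx; rw [← hUn]; exact Or.inl (Or.inl (Or.inr hx))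
  have hBSm : ∀ i, Bs i ⊆ S := by
    intro i x hx; rw [← hUn]
    exact Or.inl (Or.inr (Set.mem_iUnion.mpr ⟨i, hx⟩))
  have hCSm : ∀ i, Cs i ⊆ S := by
    intro i x hx; rw [← hUn]
    exact Or.inr (Set.mem_iUnion.mpr ⟨i, hx⟩)
  have hSmem : ∀ w, w ∈ S → w ∈ A ∨ w ∈ D ∨ (∃ i, w ∈ Bs i) ∨ (∃ i, w ∈ Cs i) := by
    intro w hw; rw [← hUn] at hw
    simp only [Set.mem_union, Set.mem_iUnion] at hw
    tauto
  have vne : ∀ {w : V}, w ∈ S → v ≠ w := fun hw e => hvS (e ▸ hw)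
  have hcompB : ∀ i, ∀ b ∈ Bs i, G.Adj v b := by
    intro i b hb
    by_contra hnb
    obtain ⟨c, hc⟩ := (hBCne i).2
    by_cases hvc : G.Adj v c
    · exact noC4 h4 v a b c hva hvc ((hAB i).1 a ha b hb) (hBiCi i b hb c hc)
        hnb ((hAB i).2 a ha c hc) (vne (hBSm i hb)) (ne_of_disj (hd i).2.1 ha hc)
    · exact noC5 h5 v a b c d hva hvd ((hAB i).1 a ha b hb) (hBiCi i b hb c hc)
        (((hDC i).1 d hd' c hc).symm) hnb hvc ((hAB i).2 a ha c hc) (haAD a ha d hd')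
        (fun h => (hDC i).2 d hd' b hb h.symm)
        (vne (hBSm i hb)) (vne (hCSm i hc)) (ne_of_disj (hd i).2.1 ha hc)
        (ne_of_disj hAD ha hd') ((ne_of_disj (hd i).2.2.1 hd' hb).symm)
  have hcompC : ∀ i, ∀ c ∈ Cs i, G.Adj v c := by
    intro i c hc
    by_contra hnc
    obtain ⟨b, hb⟩ := (hBCne i).1
    exact noC4 h4 v b c d (hcompB i b hb) hvd (hBiCi i b hb c hc)
      (((hDC i).1 d hd' c hc).symm) hnc (fun h => (hDC i).2 d hd' b hb h.symm)
      (vne (hCSm i hc)) ((ne_of_disj (hd i).2.2.1 hd' hb).symm)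
  obtain ⟨w, hwS, hwn⟩ := hv.2.2
  have h0 : (0:ℕ) < r := by omega
  have h1 : (1:ℕ) < r := by omega
  have hne01 : (⟨0, h0⟩ : Fin r) ≠ ⟨1, h1⟩ := by simp [Fin.ext_iff]
  obtain ⟨b0, hb0⟩ := (hBCne ⟨0, h0⟩).1
  obtain ⟨b1, hb1⟩ := (hBCne ⟨1, h1⟩).1
  obtain ⟨c0, hc0⟩ := (hBCne ⟨0, h0⟩).2
  obtain ⟨c1, hc1⟩ := (hBCne ⟨1, h1⟩).2
  rcases hSmem w hwS with hwA|hwD|⟨j, hj⟩|⟨j, hj⟩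
  · exact noC4 h4 v b0 w b1 (hcompB _ b0 hb0) (hcompB _ b1 hb1)
      (((hAB _).1 w hwA b0 hb0).symm) ((hAB _).1 w hwA b1 hb1)
      hwn (hP _ _ hne01 b0 (Or.inl hb0) b1 (Or.inl hb1))
      (vne hwS) (ne_of_disj (hBB _ _ hne01).1 hb0 hb1)
  · exact noC4 h4 v c0 w c1 (hcompC _ c0 hc0) (hcompC _ c1 hc1)
      (((hDC _).1 w hwD c0 hc0).symm) ((hDC _).1 w hwD c1 hc1)
      hwn (hP _ _ hne01 c0 (Or.inr hc0) c1 (Or.inr hc1))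
      (vne hwS) (ne_of_disj (hBB _ _ hne01).2 hc0 hc1)
  · exact hwn (hcompB j w hj)
  · exact hwn (hcompC j w hj)

private lemma halfLemma {r : ℕ} {S A D : Set V} {Bs Cs : Fin r → Set V}
    (h7 : Paper.Free G (pathG 7)) (h4 : Paper.Free G (cycG 4)) (h5 : Paper.Free G (cycG 5)) (hr : 3 ≤ r)
    (hT : IsThickThetaPartitionOn G S r A D Bs Cs)
    (hmax : ∀ S' : Set V, S ⊆ S' → (∃ (A' D' : Set V) (Bs' Cs' : Fin r → Set V),
        IsThickThetaPartitionOn G S' r A' D' Bs' Cs') → S' = S)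
    {v : V} (hv : v ∈ setX G S) (hvD : ∀ d ∈ D, ¬ G.Adj v d) :
    v ∈ setL G S A ∪ ⋃ i, (setT G S A (Bs i) (Cs i) ∪ setR G S A (Bs i)) := by
  have hTT := hT
  obtain ⟨hUn, hAD, hd, hBC, hBB, hAne, hDne, hBCne, hAcl, hDcl, hBCcl, haAD, hAB, hDC,
    hBiCi, hP⟩ := hT
  have hvS : v ∉ S := hv.1
  have hAS : A ⊆ S := by
    intro x hx; rw [← hUn]; exact Or.inl (Or.inl (Or.inl hx))
  have hDS : D ⊆ S := by
    intro x hx; rw [← hUn]; exact Or.inl (Or.inl (Or.inr hx))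
  have hBSm : ∀ i, Bs i ⊆ S := by
    intro i x hx; rw [← hUn]
    exact Or.inl (Or.inr (Set.mem_iUnion.mpr ⟨i, hx⟩))
  have hCSm : ∀ i, Cs i ⊆ S := by
    intro i x hx; rw [← hUn]
    exact Or.inr (Set.mem_iUnion.mpr ⟨i, hx⟩)
  have hSmem : ∀ w, w ∈ S → w ∈ A ∨ w ∈ D ∨ (∃ i, w ∈ Bs i) ∨ (∃ i, w ∈ Cs i) := by
    intro w hw; rw [← hUn] at hw
    simp only [Set.mem_union, Set.mem_iUnion] at hw
    tauto
  have vne : ∀ {w : V}, w ∈ S → v ≠ w := fun hw e => hvS (e ▸ hw)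
  have claim4 : ∀ m k : Fin r, m ≠ k → ∀ b ∈ Bs m, G.Adj v b →
      ∀ c ∈ Cs k, G.Adj v c → False := by
    intro m k hmk b hb hvb c hc hvc
    obtain ⟨d, hdD⟩ := hDne
    obtain ⟨c', hc'⟩ := (hBCne m).2
    by_cases h : G.Adj v c'
    · exact noC4 h4 v c d c' hvc h (((hDC k).1 d hdD c hc).symm) ((hDC m).1 d hdD c' hc')
        (hvD d hdD) (hP k m hmk.symm c (Or.inr hc) c' (Or.inr hc'))
        (vne (hDS hdD)) (ne_of_disj (hBB k m hmk.symm).2 hc hc')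
    · exact noC5 h5 v c d c' b hvc hvb (((hDC k).1 d hdD c hc).symm)
        ((hDC m).1 d hdD c' hc') ((hBiCi m b hb c' hc').symm)
        (hvD d hdD) h (hP k m hmk.symm c (Or.inr hc) c' (Or.inr hc'))
        (hP k m hmk.symm c (Or.inr hc) b (Or.inl hb)) ((hDC m).2 d hdD b hb)
        (vne (hDS hdD)) (vne (hCSm m hc')) (ne_of_disj (hBB k m hmk.symm).2 hc hc')
        ((ne_of_disj (hBC m k) hb hc).symm) (ne_of_disj (hd m).2.2.1 hdD hb)
  have claim3 : ∀ i j : Fin r, i ≠ j → ∀ b ∈ Bs i, G.Adj v b →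
      ∀ b' ∈ Bs j, G.Adj v b' → False := by
    intro i j hij b hb hvb b' hb' hvb'
    have hvA : ∀ a ∈ A, G.Adj v a := by
      intro a ha
      by_contra hna
      exact noC4 h4 v b a b' hvb hvb' (((hAB i).1 a ha b hb).symm) ((hAB j).1 a ha b' hb')
        hna (hP i j hij b (Or.inl hb) b' (Or.inl hb'))
        (vne (hAS ha)) (ne_of_disj (hBB i j hij).1 hb hb')
    have hvC : ∀ n : Fin r, ∀ c ∈ Cs n, ¬ G.Adj v c := by
      intro n c hc hvc
      by_cases h : i = n
      · exact claim4 j n (fun e => hij (e.trans h.symm).symm) b' hb' hvb' c hc hvc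
      · exact claim4 i n h b hb hvb c hc hvc
    have P7B : ∀ m1 m2 kk : Fin r, m1 ≠ m2 → m1 ≠ kk → m2 ≠ kk →
        ∀ x1 ∈ Bs m1, G.Adj v x1 → ∀ x2 ∈ Bs m2, G.Adj v x2 →
        ∀ bst ∈ Bs kk, ¬ G.Adj v bst → False := by
      intro m1 m2 kk h12 h1k h2k x1 hx1 hvx1 x2 hx2 hvx2 bst hbst hnbst
      obtain ⟨cm2, hcm2⟩ := (hBCne m2).2
      obtain ⟨ck, hck⟩ := (hBCne kk).2
      obtain ⟨d, hdD⟩ := hDne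
      exact noP7 h7 x1 v x2 cm2 d ck bst
        hvx1.symm hvx2 (hBiCi m2 x2 hx2 cm2 hcm2) (((hDC m2).1 d hdD cm2 hcm2).symm)
        ((hDC kk).1 d hdD ck hck) ((hBiCi kk bst hbst ck hck).symm)
        (hP m1 m2 h12 x1 (Or.inl hx1) x2 (Or.inl hx2))
        (hP m1 m2 h12 x1 (Or.inl hx1) cm2 (Or.inr hcm2))
        (fun h => (hDC m1).2 d hdD x1 hx1 h.symm)
        (hP m1 kk h1k x1 (Or.inl hx1) ck (Or.inr hck))
        (hP m1 kk h1k x1 (Or.inl hx1) bst (Or.inl hbst))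
        (hvC m2 cm2 hcm2) (hvD d hdD) (hvC kk ck hck) hnbst
        (fun h => (hDC m2).2 d hdD x2 hx2 h.symm)
        (hP m2 kk h2k x2 (Or.inl hx2) ck (Or.inr hck))
        (hP m2 kk h2k x2 (Or.inl hx2) bst (Or.inl hbst))
        (hP m2 kk h2k cm2 (Or.inr hcm2) ck (Or.inr hck))
        (hP m2 kk h2k cm2 (Or.inr hcm2) bst (Or.inl hbst))
        ((hDC kk).2 d hdD bst hbst)
        (ne_of_disj (hBB m1 m2 h12).1 hx1 hx2) (ne_of_disj (hBC m1 m2) hx1 hcm2)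
        ((ne_of_disj (hd m1).2.2.1 hdD hx1).symm) (ne_of_disj (hBC m1 kk) hx1 hck)
        (ne_of_disj (hBB m1 kk h1k).1 hx1 hbst)
        (vne (hCSm m2 hcm2)) (vne (hDS hdD)) (vne (hCSm kk hck)) (vne (hBSm kk hbst))
        ((ne_of_disj (hd m2).2.2.1 hdD hx2).symm) (ne_of_disj (hBC m2 kk) hx2 hck)
        (ne_of_disj (hBB m2 kk h2k).1 hx2 hbst)
        (ne_of_disj (hBB m2 kk h2k).2 hcm2 hck)
        ((ne_of_disj (hBC kk m2) hbst hcm2).symm)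
        (ne_of_disj (hd kk).2.2.1 hdD hbst)
    have hvBall : ∀ kk : Fin r, ∀ bb ∈ Bs kk, G.Adj v bb := by
      have step1 : ∀ kk : Fin r, kk ≠ i → kk ≠ j → ∀ bb ∈ Bs kk, G.Adj v bb := by
        intro kk h1 h2 bb hbb
        by_contra hn
        exact P7B i j kk hij h1.symm h2.symm b hb hvb b' hb' hvb' bb hbb hn
      obtain ⟨k0, hk0i, hk0j⟩ := exists_third hr i j
      obtain ⟨b0, hb0⟩ := (hBCne k0).1
      have hvb0 := step1 k0 hk0i hk0j b0 hb0
      intro kk bb hbb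
      by_cases h1 : kk = i
      · by_contra hn
        exact P7B k0 j i hk0j hk0i hij.symm b0 hb0 hvb0 b' hb' hvb' bb (h1 ▸ hbb) hn
      by_cases h2 : kk = j
      · by_contra hn
        exact P7B k0 i j hk0i hk0j hij b0 hb0 hvb0 b hb hvb bb (h2 ▸ hbb) hn
      · exact step1 kk h1 h2 bb hbb
    exact extendA_false hTT hmax v hvS hvA hvBall hvD hvC
  have claim3C : ∀ i j : Fin r, i ≠ j → ∀ c ∈ Cs i, G.Adj v c →
      ∀ c' ∈ Cs j, G.Adj v c' → False := by
    intro i j hij c hc hvc c' hc' hvc'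
    obtain ⟨d, hdD⟩ := hDne
    exact noC4 h4 v c d c' hvc hvc' (((hDC i).1 d hdD c hc).symm) ((hDC j).1 d hdD c' hc')
      (hvD d hdD) (hP i j hij c (Or.inr hc) c' (Or.inr hc'))
      (vne (hDS hdD)) (ne_of_disj (hBB i j hij).2 hc hc')
  by_cases hPex : ∃ i : Fin r, (∃ b ∈ Bs i, G.Adj v b) ∨ (∃ c ∈ Cs i, G.Adj v c)
  · obtain ⟨i, hi⟩ := hPex
    have huniq : ∀ j, j ≠ i → (∀ b ∈ Bs j, ¬ G.Adj v b) ∧ (∀ c ∈ Cs j, ¬ G.Adj v c) := by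
      intro j hji
      constructor
      · intro x hx hvx
        rcases hi with ⟨b, hb, hvb⟩|⟨c, hc, hvc⟩
        · exact claim3 j i hji x hx hvx b hb hvb
        · exact claim4 j i hji x hx hvx c hc hvc
      · intro x hx hvx
        rcases hi with ⟨b, hb, hvb⟩|⟨c, hc, hvc⟩
        · exact claim4 i j hji.symm b hb hvb x hx hvx
        · exact claim3C j i hji x hx hvx c hc hvc
    obtain ⟨j, k, hjk, hji, hki⟩ := exists_two_others hr i
    by_cases hBn : ∃ b ∈ Bs i, G.Adj v b
    · obtain ⟨b, hb, hvb⟩ := hBn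
      have hvA : ∀ a ∈ A, G.Adj v a := by
        intro a ha
        by_contra hna
        obtain ⟨bj, hbj⟩ := (hBCne j).1
        obtain ⟨cj, hcj⟩ := (hBCne j).2
        obtain ⟨ck, hck⟩ := (hBCne k).2
        obtain ⟨d, hdD⟩ := hDne
        exact noP7 h7 v b a bj cj d ck
          hvb (((hAB i).1 a ha b hb).symm) ((hAB j).1 a ha bj hbj)
          (hBiCi j bj hbj cj hcj) (((hDC j).1 d hdD cj hcj).symm) ((hDC k).1 d hdD ck hck)
          hna ((huniq j hji).1 bj hbj) ((huniq j hji).2 cj hcj) (hvD d hdD)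
          ((huniq k hki).2 ck hck)
          (hP i j hji.symm b (Or.inl hb) bj (Or.inl hbj))
          (hP i j hji.symm b (Or.inl hb) cj (Or.inr hcj))
          (fun h => (hDC i).2 d hdD b hb h.symm)
          (hP i k hki.symm b (Or.inl hb) ck (Or.inr hck))
          ((hAB j).2 a ha cj hcj) (haAD a ha d hdD) ((hAB k).2 a ha ck hck)
          (fun h => (hDC j).2 d hdD bj hbj h.symm)
          (hP j k hjk bj (Or.inl hbj) ck (Or.inr hck))
          (hP j k hjk cj (Or.inr hcj) ck (Or.inr hck))
          (vne (hAS ha)) (vne (hBSm j hbj)) (vne (hCSm j hcj)) (vne (hDS hdD))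
          (vne (hCSm k hck))
          (ne_of_disj (hBB i j hji.symm).1 hb hbj) (ne_of_disj (hBC i j) hb hcj)
          ((ne_of_disj (hd i).2.2.1 hdD hb).symm) (ne_of_disj (hBC i k) hb hck)
          (ne_of_disj (hd j).2.1 ha hcj) (ne_of_disj hAD ha hdD)
          (ne_of_disj (hd k).2.1 ha hck)
          ((ne_of_disj (hd j).2.2.1 hdD hbj).symm) (ne_of_disj (hBC j k) hbj hck)
          (ne_of_disj (hBB j k hjk).2 hcj hck)
      by_cases hCn : ∃ c ∈ Cs i, G.Adj v c
      · obtain ⟨c, hc, hvc⟩ := hCn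
        have hvBi : ∀ b'' ∈ Bs i, G.Adj v b'' := by
          intro b'' hb''
          by_contra hnb
          obtain ⟨a, ha⟩ := hAne
          exact noC4 h4 v a b'' c (hvA a ha) hvc ((hAB i).1 a ha b'' hb'')
            (hBiCi i b'' hb'' c hc) hnb ((hAB i).2 a ha c hc)
            (vne (hBSm i hb'')) (ne_of_disj (hd i).2.1 ha hc)
        have hCmix : ∃ c' ∈ Cs i, ¬ G.Adj v c' := by
          by_contra hcc
          push_neg at hcc
          exact extendB_false hTT hmax i v hvS hvA hvBi hcc hvD huniq
        refine Or.inr (Set.mem_iUnion.mpr ⟨i, Or.inl ⟨hv, ?_, ⟨c, hc, hvc⟩, hCmix, ?_⟩⟩)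
        · intro w hw
          rcases hw with hw|hw
          · exact hvA w hw
          · exact hvBi w hw
        · intro w hw
          obtain ⟨hwS, hwn⟩ := hw
          rcases hSmem w hwS with h|h|⟨j', hj'⟩|⟨j', hj'⟩
          · exact absurd (Set.mem_union_left _ (Set.mem_union_left _ h)) hwn
          · exact hvD w h
          · by_cases e : j' = i
            · exact absurd (Set.mem_union_left _ (Set.mem_union_right _ (e ▸ hj'))) hwn
            · exact (huniq j' e).1 w hj'
          · by_cases e : j' = i
            · exact absurd (Set.mem_union_right _ (e ▸ hj')) hwn
            · exact (huniq j' e).2 w hj'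
      · push_neg at hCn
        refine Or.inr (Set.mem_iUnion.mpr ⟨i, Or.inr ⟨hv, hvA, ⟨b, hb, hvb⟩, ?_⟩⟩)
        intro w hw
        obtain ⟨hwS, hwn⟩ := hw
        rcases hSmem w hwS with h|h|⟨j', hj'⟩|⟨j', hj'⟩
        · exact absurd (Set.mem_union_left _ h) hwn
        · exact hvD w h
        · by_cases e : j' = i
          · exact absurd (Set.mem_union_right _ (e ▸ hj')) hwn
          · exact (huniq j' e).1 w hj'
        · by_cases e : j' = i
          · exact hCn w (e ▸ hj')
          · exact (huniq j' e).2 w hj'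
    · push_neg at hBn
      exfalso
      have hCn : ∃ c ∈ Cs i, G.Adj v c := by
        rcases hi with ⟨b, hb, hvb⟩|h
        · exact absurd hvb (hBn b hb)
        · exact h
      obtain ⟨c, hc, hvc⟩ := hCn
      have hvA : ∀ a ∈ A, ¬ G.Adj v a := by
        intro a ha hva
        obtain ⟨b, hb⟩ := (hBCne i).1
        exact noC4 h4 v a b c hva hvc ((hAB i).1 a ha b hb) (hBiCi i b hb c hc)
          (hBn b hb) ((hAB i).2 a ha c hc) (vne (hBSm i hb)) (ne_of_disj (hd i).2.1 ha hc)
      obtain ⟨a, ha⟩ := hAne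
      obtain ⟨d, hdD⟩ := hDne
      obtain ⟨bj, hbj⟩ := (hBCne j).1
      obtain ⟨cj, hcj⟩ := (hBCne j).2
      obtain ⟨bk, hbk⟩ := (hBCne k).1
      exact noP7 h7 v c d cj bj a bk
        hvc (((hDC i).1 d hdD c hc).symm) ((hDC j).1 d hdD cj hcj)
        ((hBiCi j bj hbj cj hcj).symm) (((hAB j).1 a ha bj hbj).symm) ((hAB k).1 a ha bk hbk)
        (hvD d hdD) ((huniq j hji).2 cj hcj) ((huniq j hji).1 bj hbj) (hvA a ha)
        ((huniq k hki).1 bk hbk)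
        (hP i j hji.symm c (Or.inr hc) cj (Or.inr hcj))
        (hP i j hji.symm c (Or.inr hc) bj (Or.inl hbj))
        (fun h => (hAB i).2 a ha c hc h.symm)
        (hP i k hki.symm c (Or.inr hc) bk (Or.inl hbk))
        ((hDC j).2 d hdD bj hbj) (fun h => haAD a ha d hdD h.symm)
        ((hDC k).2 d hdD bk hbk)
        (fun h => (hAB j).2 a ha cj hcj h.symm)
        (hP j k hjk cj (Or.inr hcj) bk (Or.inl hbk))
        (hP j k hjk bj (Or.inl hbj) bk (Or.inl hbk))
        (vne (hDS hdD)) (vne (hCSm j hcj)) (vne (hBSm j hbj)) (vne (hAS ha))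
        (vne (hBSm k hbk))
        (ne_of_disj (hBB i j hji.symm).2 hc hcj) ((ne_of_disj (hBC j i) hbj hc).symm)
        ((ne_of_disj (hd i).2.1 ha hc).symm) ((ne_of_disj (hBC k i) hbk hc).symm)
        (ne_of_disj (hd j).2.2.1 hdD hbj) ((ne_of_disj hAD ha hdD).symm)
        (ne_of_disj (hd k).2.2.1 hdD hbk)
        ((ne_of_disj (hd j).2.1 ha hcj).symm) ((ne_of_disj (hBC k j) hbk hcj).symm)
        (ne_of_disj (hBB j k hjk).1 hbj hbk)
  · push_neg at hPex
    obtain ⟨w, hwS, hvw⟩ := hv.2.1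
    have hwA : w ∈ A := by
      rcases hSmem w hwS with h|h|⟨j, hj⟩|⟨j, hj⟩
      · exact h
      · exact absurd hvw (hvD w h)
      · exact absurd hvw ((hPex j).1 w hj)
      · exact absurd hvw ((hPex j).2 w hj)
    refine Or.inl ⟨hv, ⟨w, hwA, hvw⟩, ?_⟩
    intro w' hw'
    rcases hSmem w' hw'.1 with h|h|⟨j, hj⟩|⟨j, hj⟩
    · exact absurd h hw'.2
    · exact hvD w' h
    · exact (hPex j).1 w' hj
    · exact (hPex j).2 w' hj

end MainLemmas
theorem statement_16 {V : Type*} [Fintype V] (G : SimpleGraph V)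
    (h7 : Paper.Free G (pathG 7)) (h4 : Paper.Free G (cycG 4)) (h5 : Paper.Free G (cycG 5))
    (hc7 : Paper.Free G (cycG 7))
    (r : ℕ) (hr : 3 ≤ r) (hθ : ContainsInducedOn G Set.univ (thetaG r))
    (S : Set V) (A D : Set V) (Bs Cs : Fin r → Set V)
    (hT : IsThickThetaPartitionOn G S r A D Bs Cs)
    (hmax : ∀ S' : Set V, S ⊆ S' →
      (∃ (A' D' : Set V) (Bs' Cs' : Fin r → Set V),
        IsThickThetaPartitionOn G S' r A' D' Bs' Cs') → S' = S) :
    setX G S = setL G S A ∪ setL G S D ∪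
      ⋃ i : Fin r, (setT G S A (Bs i) (Cs i) ∪ setR G S A (Bs i) ∪
        setT G S D (Cs i) (Bs i) ∪ setR G S D (Cs i)) := by
  ext v
  constructor
  · intro hv
    by_cases hD : ∃ d ∈ D, G.Adj v d
    · have hvA : ∀ a ∈ A, ¬ G.Adj v a := by
        intro a ha hva
        obtain ⟨d, hdD, hvd⟩ := hD
        exact claim1 h4 h5 hr hT hv ha hva hdD hvd
      have hres := halfLemma h7 h4 h5 hr (swapTT hT) hmax hv hvA
      rcases hres with h|h
      · exact Or.inl (Or.inr h)
      · obtain ⟨i, hi⟩ := Set.mem_iUnion.mp h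
        refine Or.inr (Set.mem_iUnion.mpr ⟨i, ?_⟩)
        rcases hi with h'|h'
        · exact Or.inl (Or.inr h')
        · exact Or.inr h'
    · push_neg at hD
      have hres := halfLemma h7 h4 h5 hr hT hmax hv hD
      rcases hres with h|h
      · exact Or.inl (Or.inl h)
      · obtain ⟨i, hi⟩ := Set.mem_iUnion.mp h
        refine Or.inr (Set.mem_iUnion.mpr ⟨i, ?_⟩)
        rcases hi with h'|h'
        · exact Or.inl (Or.inl (Or.inl h'))
        · exact Or.inl (Or.inl (Or.inr h'))
  · intro hv
    rcases hv with (h|h)|h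
    · exact h.1
    · exact h.1
    · obtain ⟨i, hi⟩ := Set.mem_iUnion.mp h
      rcases hi with ((h'|h')|h')|h'
      · exact h'.1
      · exact h'.1
      · exact h'.1
      · exact h'.1
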